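/- There is an absolute constant C > 0 with the following property. Let c : ℕ≥1 → ℝ≥0 be a nonnegative function, let κ ≥ 0 be real, and for each integer k ≥ 0 define ψ_k(y) = (1/k!) ∑_{m ≤ y} c(m) (log(y/m))^k and r_k(y) = ψ_k(y) − κ·y for real y > 0. Then for every integer k ≥ 1, every real 0 < λ ≤ 1, and every real x ≥ 1, sup_{1 ≤ y ≤ x} |r_{k−1}(y)| ≤ C · ( λ·κ·x + λ^{−1} · sup_{1 ≤ y ≤ e·x} |r_k(y)| ). -/

import Mathlib

open Finset Real

/-- For `c : ℕ → ℝ` and `k : ℕ`, the weighted Chebyshev-type sum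
`ψ_k(y) = (1/k!) ∑_{1 ≤ m ≤ y} c(m) (log (y/m))^k`. -/
noncomputable def psi (c : ℕ → ℝ) (k : ℕ) (y : ℝ) : ℝ :=
  (1 / (Nat.factorial k : ℝ)) * ∑ m ∈ Finset.Icc 1 ⌊y⌋₊, c m * (Real.log (y / m)) ^ k

lemma pow_lb (k : ℕ) {a b : ℝ} (ha : 0 ≤ a) (hb : 0 ≤ b) :
    a^(k+1) + (k+1)*b*a^k ≤ (a+b)^(k+1) := by
  induction k with
  | zero => simp
  | succ n ih =>
    have h1 : (a+b) * (a^(n+1) + ((n:ℝ)+1)*b*a^n) ≤ (a+b) * (a+b)^(n+1) := by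
      apply mul_le_mul_of_nonneg_left _ (by linarith)
      push_cast at ih; exact ih
    have e : (a+b)^(n+1+1) = (a+b) * (a+b)^(n+1) := by ring
    have e2 : (a+b)*(a^(n+1) + ((n:ℝ)+1)*b*a^n)
        = a^(n+1+1) + ((n:ℝ)+1+1)*b*a^(n+1) + ((n:ℝ)+1)*(b*b)*a^n := by ring
    have h4 : 0 ≤ ((n:ℝ)+1)*(b*b)*a^n :=
      mul_nonneg (mul_nonneg (by positivity) (mul_nonneg hb hb)) (pow_nonneg ha n)
    push_cast
    linarith

lemma pow_ub (k : ℕ) {a b : ℝ} (ha : 0 ≤ a) (hb : 0 ≤ b) :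
    (a+b)^(k+1) ≤ a^(k+1) + (k+1)*b*(a+b)^k := by
  induction k with
  | zero => simp
  | succ n ih =>
    have h1 : (a+b)^(n+1) * (a+b) ≤ (a^(n+1) + ((n:ℝ)+1)*b*(a+b)^n) * (a+b) := by
      apply mul_le_mul_of_nonneg_right _ (by linarith)
      push_cast at ih; exact ih
    have h2 : b * a^(n+1) ≤ b * (a+b)^(n+1) :=
      mul_le_mul_of_nonneg_left (pow_le_pow_left₀ ha (by linarith) (n+1)) hb
    have e : (a+b)^(n+1+1) = (a+b)^(n+1) * (a+b) := by ring
    have e2 : (a^(n+1) + ((n:ℝ)+1)*b*(a+b)^n) * (a+b)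
        = a^(n+1+1) + b*a^(n+1) + ((n:ℝ)+1)*b*(a+b)^(n+1) := by ring
    push_cast
    linarith

lemma exp_ub {x : ℝ} (h0 : 0 ≤ x) (h1 : x ≤ 1) : Real.exp x ≤ 1 + x + x^2 := by
  have h := Real.exp_bound (x := x) (by rwa [abs_of_nonneg h0]) (by norm_num : 0 < 2)
  simp [Finset.sum_range_succ, abs_of_nonneg h0] at h
  have := abs_le.1 h
  nlinarith [this.2, sq_nonneg x]

lemma exp_neg_ub {x : ℝ} (h0 : 0 ≤ x) (h1 : x ≤ 1) : Real.exp (-x) ≤ 1 - x + x^2 := by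
  have h := Real.exp_bound (x := -x) (by rw [abs_neg]; rwa [abs_of_nonneg h0])
    (by norm_num : 0 < 2)
  simp [Finset.sum_range_succ, abs_neg, abs_of_nonneg h0] at h
  have := abs_le.1 h
  nlinarith [this.2, sq_nonneg x]

lemma log_ratio_nonneg {y : ℝ} {m : ℕ} (hy : 0 ≤ y) (hm : m ∈ Finset.Icc 1 ⌊y⌋₊) :
    0 ≤ Real.log (y / m) := by
  simp only [Finset.mem_Icc] at hm
  have hm1 : (1:ℝ) ≤ m := by exact_mod_cast hm.1
  have hmy : (m:ℝ) ≤ y := le_trans (by exact_mod_cast hm.2) (Nat.floor_le hy)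
  exact Real.log_nonneg ((le_div_iff₀ (by linarith)).mpr (by linarith))

lemma psi_nonneg (c : ℕ → ℝ) (hc : ∀ m, 0 ≤ c m) (k : ℕ) {y : ℝ} (hy : 0 ≤ y) :
    0 ≤ psi c k y := by
  unfold psi
  apply mul_nonneg (by positivity)
  exact Finset.sum_nonneg fun m hm =>
    mul_nonneg (hc m) (pow_nonneg (log_ratio_nonneg hy hm) k)

lemma psi_one (c : ℕ → ℝ) (k : ℕ) : psi c (k+1) 1 = 0 := by
  simp [psi]

lemma psi_combine (c : ℕ → ℝ) (k : ℕ) (lam : ℝ) (y : ℝ) :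
    lam * psi c k y + psi c (k+1) y
      = (1 / ((k+1).factorial : ℝ)) *
        ∑ m ∈ Finset.Icc 1 ⌊y⌋₊,
          c m * (((k:ℝ)+1) * lam * (Real.log (y/m))^k + (Real.log (y/m))^(k+1)) := by
  have hfac : (((k+1).factorial : ℕ) : ℝ) = ((k:ℝ)+1) * (k.factorial : ℝ) := by
    rw [Nat.factorial_succ]; push_cast; ring
  unfold psi
  rw [Finset.mul_sum, Finset.mul_sum, Finset.mul_sum, Finset.mul_sum, ← Finset.sum_add_distrib]
  apply Finset.sum_congr rfl
  intro m hm
  have h1 : (k.factorial : ℝ) ≠ 0 := by positivity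
  field_simp [hfac]
  rw [hfac]; ring

lemma stepA (c : ℕ → ℝ) (hc : ∀ m, 0 ≤ c m) (k : ℕ) {lam y : ℝ}
    (hlam : 0 ≤ lam) (hy : 1 ≤ y) :
    lam * psi c k y + psi c (k+1) y ≤ psi c (k+1) (y * Real.exp lam) := by
  have hy0 : (0:ℝ) ≤ y := by linarith
  have hyu : y ≤ y * Real.exp lam :=
    le_mul_of_one_le_right hy0 (Real.one_le_exp hlam)
  have hu0 : (0:ℝ) ≤ y * Real.exp lam := by positivity
  rw [psi_combine]
  unfold psi
  rw [mul_le_mul_iff_right₀ (by positivity : (0:ℝ) < 1 / (((k+1).factorial : ℕ) : ℝ))]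
  calc ∑ m ∈ Finset.Icc 1 ⌊y⌋₊,
          c m * (((k:ℝ)+1) * lam * (Real.log (y/m))^k + (Real.log (y/m))^(k+1))
      ≤ ∑ m ∈ Finset.Icc 1 ⌊y⌋₊, c m * (Real.log (y * Real.exp lam / m))^(k+1) := by
        apply Finset.sum_le_sum
        intro m hm
        simp only [Finset.mem_Icc] at hm
        have hm1 : (1:ℝ) ≤ m := by exact_mod_cast hm.1
        have hL : 0 ≤ Real.log (y/m) := log_ratio_nonneg hy0 (by simpa [Finset.mem_Icc] using hm)
        have hlog : Real.log (y * Real.exp lam / m) = Real.log (y/m) + lam := by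
          rw [show y * Real.exp lam / m = (y/m) * Real.exp lam by ring,
            Real.log_mul (by positivity) (Real.exp_ne_zero lam), Real.log_exp]
        rw [hlog]
        apply mul_le_mul_of_nonneg_left _ (hc m)
        have := pow_lb k hL hlam
        push_cast
        linarith
    _ ≤ ∑ m ∈ Finset.Icc 1 ⌊y * Real.exp lam⌋₊,
          c m * (Real.log (y * Real.exp lam / m))^(k+1) := by
        apply Finset.sum_le_sum_of_subset_of_nonneg
        · exact Finset.Icc_subset_Icc_right (Nat.floor_mono hyu)
        · intro m hm _
          exact mul_nonneg (hc m) (pow_nonneg (log_ratio_nonneg hu0 hm) _)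

lemma stepB (c : ℕ → ℝ) (hc : ∀ m, 0 ≤ c m) (k : ℕ) {lam y : ℝ}
    (hlam : 0 ≤ lam) (hz : 1 ≤ y * Real.exp (-lam)) :
    psi c (k+1) y ≤ psi c (k+1) (y * Real.exp (-lam)) + lam * psi c k y := by
  set z := y * Real.exp (-lam) with hzdef
  have hz0 : (0:ℝ) ≤ z := by linarith
  have hy : 1 ≤ y := by
    have he1 : Real.exp (-lam) ≤ 1 := Real.exp_le_one_iff.mpr (by linarith)
    have he0 : 0 < Real.exp (-lam) := Real.exp_pos _
    nlinarith
  have hy0 : (0:ℝ) ≤ y := by linarith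
  have hzy : z ≤ y := mul_le_of_le_one_right hy0 (Real.exp_le_one_iff.mpr (by linarith))
  have hrel : ∀ m : ℕ, 1 ≤ m → Real.log (y/m) = Real.log (z/m) + lam := by
    intro m hm
    have hm1 : (1:ℝ) ≤ m := by exact_mod_cast hm
    have : y / m = (z/m) * Real.exp lam := by
      rw [hzdef]; rw [Real.exp_neg]; field_simp
    rw [this, Real.log_mul (by positivity) (Real.exp_ne_zero lam), Real.log_exp]
  have hss : Finset.Icc 1 ⌊z⌋₊ ⊆ Finset.Icc 1 ⌊y⌋₊ :=
    Finset.Icc_subset_Icc_right (Nat.floor_mono hzy)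
  have key : ∑ m ∈ Finset.Icc 1 ⌊y⌋₊, c m * (Real.log (y/m))^(k+1)
      ≤ (∑ m ∈ Finset.Icc 1 ⌊z⌋₊, c m * (Real.log (z/m))^(k+1))
        + ∑ m ∈ Finset.Icc 1 ⌊y⌋₊, c m * (((k:ℝ)+1) * lam * (Real.log (y/m))^k) := by
    have hrw : ∑ m ∈ Finset.Icc 1 ⌊z⌋₊, c m * (Real.log (z/m))^(k+1)
        = ∑ m ∈ Finset.Icc 1 ⌊y⌋₊,
            (if m ∈ Finset.Icc 1 ⌊z⌋₊ then c m * (Real.log (z/m))^(k+1) else 0) := by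
      rw [Finset.sum_ite_mem, Finset.inter_eq_right.mpr hss]
    rw [hrw, ← Finset.sum_add_distrib]
    apply Finset.sum_le_sum
    intro m hm
    simp only [Finset.mem_Icc] at hm
    have hm1 : (1:ℝ) ≤ m := by exact_mod_cast hm.1
    have hL : 0 ≤ Real.log (y/m) := log_ratio_nonneg hy0 (by simpa [Finset.mem_Icc] using hm)
    by_cases hmn : m ∈ Finset.Icc 1 ⌊z⌋₊
    · simp only [hmn, if_true]
      have ha : 0 ≤ Real.log (z/m) := log_ratio_nonneg hz0 hmn
      have := pow_ub k ha hlam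
      rw [hrel m hm.1]
      have h2 := mul_le_mul_of_nonneg_left this (hc m)
      push_cast at h2 ⊢
      linarith
    · simp only [hmn, if_false, zero_add]
      have hmz : z < m := by
        simp only [Finset.mem_Icc] at hmn
        push_neg at hmn
        have h3 : ⌊z⌋₊ < m := hmn hm.1
        have : z < (⌊z⌋₊ : ℝ) + 1 := Nat.lt_floor_add_one z
        have h4 : ((⌊z⌋₊ : ℝ)) + 1 ≤ m := by exact_mod_cast h3
        linarith
      have hLlam : Real.log (y/m) ≤ lam := by
        rw [hrel m hm.1]
        have : Real.log (z/m) ≤ 0 :=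
          Real.log_nonpos (by positivity) ((div_le_one (by linarith)).mpr hmz.le)
        linarith
      have h1 : (Real.log (y/m))^(k+1) ≤ ((k:ℝ)+1) * lam * (Real.log (y/m))^k := by
        have e : (Real.log (y/m))^(k+1) = (Real.log (y/m))^k * Real.log (y/m) := pow_succ _ _
        have h5 : (Real.log (y/m))^k * Real.log (y/m) ≤ (Real.log (y/m))^k * lam :=
          mul_le_mul_of_nonneg_left hLlam (pow_nonneg hL k)
        have h6 : 0 ≤ lam * (Real.log (y/m))^k := mul_nonneg hlam (pow_nonneg hL k)
        have h7 : (1:ℝ) ≤ (k:ℝ)+1 := by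
          have : (0:ℝ) ≤ (k:ℝ) := Nat.cast_nonneg k
          linarith
        nlinarith
      exact mul_le_mul_of_nonneg_left h1 (hc m)
  unfold psi
  have hfac : (((k+1).factorial : ℕ) : ℝ) = ((k:ℝ)+1) * (k.factorial : ℝ) := by
    rw [Nat.factorial_succ]; push_cast; ring
  have e3 : lam * ((1/(k.factorial:ℝ)) * ∑ m ∈ Finset.Icc 1 ⌊y⌋₊, c m * (Real.log (y/m))^k)
      = (1/(((k+1).factorial:ℕ):ℝ)) *
        ∑ m ∈ Finset.Icc 1 ⌊y⌋₊, c m * (((k:ℝ)+1) * lam * (Real.log (y/m))^k) := by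
    simp only [Finset.mul_sum]
    apply Finset.sum_congr rfl
    intro m hm
    have h1 : (k.factorial : ℝ) ≠ 0 := by positivity
    field_simp [hfac]
    rw [hfac]; ring
  rw [e3, ← mul_add]
  exact mul_le_mul_of_nonneg_left key (by positivity)

lemma bdd_psi (c : ℕ → ℝ) (hc : ∀ m, 0 ≤ c m) (κ : ℝ) (hκ : 0 ≤ κ) (k : ℕ)
    {X : ℝ} (hX : 1 ≤ X) :
    BddAbove ((fun y => |psi c k y - κ * y|) '' Set.Icc 1 X) := by
  have hX0 : (0:ℝ) ≤ X := by linarith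
  have hlogX : 0 ≤ Real.log X := Real.log_nonneg hX
  have hsum0 : 0 ≤ ∑ m ∈ Finset.Icc 1 ⌊X⌋₊, c m := Finset.sum_nonneg fun m _ => hc m
  refine ⟨(1/(k.factorial:ℝ)) * ((∑ m ∈ Finset.Icc 1 ⌊X⌋₊, c m) * (Real.log X)^k) + κ * X, ?_⟩
  rintro w ⟨y, ⟨hy1, hy2⟩, rfl⟩
  have hy0 : (0:ℝ) ≤ y := by linarith
  have hpsi_le : psi c k y
      ≤ (1/(k.factorial:ℝ)) * ((∑ m ∈ Finset.Icc 1 ⌊X⌋₊, c m) * (Real.log X)^k) := by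
    unfold psi
    apply mul_le_mul_of_nonneg_left _ (by positivity)
    calc ∑ m ∈ Finset.Icc 1 ⌊y⌋₊, c m * (Real.log (y/m))^k
        ≤ ∑ m ∈ Finset.Icc 1 ⌊y⌋₊, c m * (Real.log X)^k := by
          apply Finset.sum_le_sum
          intro m hm
          apply mul_le_mul_of_nonneg_left _ (hc m)
          apply pow_le_pow_left₀ (log_ratio_nonneg hy0 hm)
          apply Real.log_le_log (by
            simp only [Finset.mem_Icc] at hm
            have hm1 : (1:ℝ) ≤ m := by exact_mod_cast hm.1
            positivity)
          · simp only [Finset.mem_Icc] at hm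
            have hm1 : (1:ℝ) ≤ m := by exact_mod_cast hm.1
            calc y / m ≤ y / 1 := by
                  apply div_le_div_of_nonneg_left hy0 (by linarith) hm1
              _ = y := div_one y
              _ ≤ X := hy2
      _ ≤ ∑ m ∈ Finset.Icc 1 ⌊X⌋₊, c m * (Real.log X)^k := by
          apply Finset.sum_le_sum_of_subset_of_nonneg
            (Finset.Icc_subset_Icc_right (Nat.floor_mono hy2))
          intro m _ _
          exact mul_nonneg (hc m) (pow_nonneg hlogX k)
      _ = (∑ m ∈ Finset.Icc 1 ⌊X⌋₊, c m) * (Real.log X)^k := by rw [Finset.sum_mul]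
  have h0 : 0 ≤ psi c k y := psi_nonneg c hc k hy0
  have hκy : κ * y ≤ κ * X := mul_le_mul_of_nonneg_left hy2 hκ
  have hκy0 : 0 ≤ κ * y := mul_nonneg hκ hy0
  rw [abs_le]
  constructor <;>
    nlinarith [mul_nonneg (mul_nonneg hsum0 (pow_nonneg hlogX k))
      (by positivity : (0:ℝ) ≤ 1/(k.factorial:ℝ))]

/-- There is an absolute constant `C > 0` such that, with `r_k(y) = ψ_k(y) − κ·y` for a
nonnegative `c : ℕ → ℝ` and real `κ ≥ 0`, for every `k ≥ 1`, `0 < λ ≤ 1` and `x ≥ 1`,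
`sup_{1 ≤ y ≤ x} |r_{k−1}(y)| ≤ C (λ κ x + λ⁻¹ sup_{1 ≤ y ≤ e x} |r_k(y)|)`. -/
theorem remainder_downward_induction :
    ∃ C : ℝ, 0 < C ∧ ∀ (c : ℕ → ℝ), (∀ m, 0 ≤ c m) → ∀ κ : ℝ, 0 ≤ κ →
      ∀ k : ℕ, 1 ≤ k → ∀ lam : ℝ, 0 < lam → lam ≤ 1 → ∀ x : ℝ, 1 ≤ x →
        sSup ((fun y : ℝ => |psi c (k - 1) y - κ * y|) '' Set.Icc 1 x) ≤
          C * (lam * κ * x +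
            lam⁻¹ * sSup ((fun y : ℝ => |psi c k y - κ * y|) '' Set.Icc 1 (Real.exp 1 * x))) := by
  refine ⟨3, by norm_num, ?_⟩
  intro c hc κ hκ k hk lam hlam0 hlam1 x hx
  obtain ⟨j, rfl⟩ : ∃ j, k = j + 1 := ⟨k - 1, (Nat.succ_pred_eq_of_pos hk).symm⟩
  simp only [Nat.add_sub_cancel]
  have hE1 : (1:ℝ) ≤ Real.exp 1 := Real.one_le_exp zero_le_one
  have hE3 : Real.exp 1 ≤ 3 := by
    have := Real.exp_one_lt_d9; linarith
  have hx0 : (0:ℝ) ≤ x := by linarith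
  have hX1 : (1:ℝ) ≤ Real.exp 1 * x := by nlinarith
  have hbdd := bdd_psi c hc κ hκ (j+1) hX1
  set R := sSup ((fun y : ℝ => |psi c (j+1) y - κ * y|) '' Set.Icc 1 (Real.exp 1 * x)) with hR
  have hmem : ∀ t, t ∈ Set.Icc 1 (Real.exp 1 * x) → |psi c (j+1) t - κ * t| ≤ R :=
    fun t ht => le_csSup hbdd ⟨t, ht, rfl⟩
  have h1mem : (1:ℝ) ∈ Set.Icc 1 (Real.exp 1 * x) := ⟨le_refl 1, hX1⟩
  have hκR : κ ≤ R := by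
    have h := hmem 1 h1mem
    rwa [psi_one, zero_sub, mul_one, abs_neg, abs_of_nonneg hκ] at h
  have hR0 : 0 ≤ R := le_trans hκ hκR
  have hinv1 : (1:ℝ) ≤ lam⁻¹ := (one_le_inv₀ hlam0).mpr hlam1
  have hinvR0 : 0 ≤ lam⁻¹ * R := mul_nonneg (by positivity) hR0
  have hRinvR : R ≤ lam⁻¹ * R := le_mul_of_one_le_left hR0 hinv1
  have hlkx0 : 0 ≤ lam * κ * x := by positivity
  apply Real.sSup_le
  · rintro w ⟨y, ⟨hy1, hyx⟩, rfl⟩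
    dsimp only
    have hy0 : (0:ℝ) ≤ y := by linarith
    have hyX : y ≤ Real.exp 1 * x := le_trans hyx (le_mul_of_one_le_left hx0 hE1)
    have hymem : y ∈ Set.Icc 1 (Real.exp 1 * x) := ⟨hy1, hyX⟩
    have humem : y * Real.exp lam ∈ Set.Icc 1 (Real.exp 1 * x) := by
      constructor
      · exact le_trans hy1 (le_mul_of_one_le_right hy0 (Real.one_le_exp hlam0.le))
      · calc y * Real.exp lam ≤ x * Real.exp 1 :=
            mul_le_mul hyx (Real.exp_le_exp.mpr hlam1) (Real.exp_pos lam).le hx0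
          _ = Real.exp 1 * x := mul_comm _ _
    have hA := stepA c hc j hlam0.le hy1
    have e1 := (abs_le.1 (hmem _ humem)).2
    have e2 := (abs_le.1 (hmem _ hymem)).1
    have hexp := exp_ub hlam0.le hlam1
    have hκy0 : 0 ≤ κ * y := mul_nonneg hκ hy0
    have t1 : κ * y * Real.exp lam ≤ κ * y * (1 + lam + lam^2) :=
      mul_le_mul_of_nonneg_left hexp hκy0
    have t2 : κ * y * lam^2 ≤ κ * x * lam^2 :=
      mul_le_mul_of_nonneg_right (mul_le_mul_of_nonneg_left hyx hκ) (sq_nonneg lam)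
    have key1 : lam * (psi c j y - κ * y) ≤ 2*R + lam^2 * (κ * x) := by
      linarith [hA, e1, e2, t1, t2]
    have up : psi c j y - κ * y ≤ 2 * (lam⁻¹ * R) + lam * (κ * x) := by
      have h : psi c j y - κ * y ≤ (2*R + lam^2*(κ*x))/lam :=
        (le_div_iff₀ hlam0).mpr (by linarith [key1])
      have e : (2*R + lam^2*(κ*x))/lam = 2*(lam⁻¹*R) + lam*(κ*x) := by
        field_simp
      rw [e] at h
      exact h
    have low : -(3 * (lam * κ * x + lam⁻¹ * R)) ≤ psi c j y - κ * y := by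
      by_cases hz : 1 ≤ y * Real.exp (-lam)
      · have hB := stepB c hc j hlam0.le hz
        have hzmem : y * Real.exp (-lam) ∈ Set.Icc 1 (Real.exp 1 * x) := by
          refine ⟨hz, ?_⟩
          calc y * Real.exp (-lam) ≤ y * 1 :=
              mul_le_mul_of_nonneg_left (Real.exp_le_one_iff.mpr (by linarith)) hy0
            _ = y := mul_one y
            _ ≤ Real.exp 1 * x := hyX
        have e3 := (abs_le.1 (hmem _ hzmem)).2
        have hexp2 := exp_neg_ub hlam0.le hlam1
        have t3 : κ * y * Real.exp (-lam) ≤ κ * y * (1 - lam + lam^2) :=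
          mul_le_mul_of_nonneg_left hexp2 hκy0
        have key2 : -(2*R + lam^2*(κ*x)) ≤ lam * (psi c j y - κ * y) := by
          linarith [hB, e2, e3, t3, t2]
        have h : -(2*R + lam^2*(κ*x))/lam ≤ psi c j y - κ * y :=
          (div_le_iff₀ hlam0).mpr (by linarith [key2])
        have e : -(2*R + lam^2*(κ*x))/lam = -(2*(lam⁻¹*R) + lam*(κ*x)) := by
          field_simp
        rw [e] at h
        linarith [hinvR0, hlkx0, h]
      · push_neg at hz
        have hyexp : y ≤ Real.exp lam := by
          have h5 : y * Real.exp (-lam) * Real.exp lam < 1 * Real.exp lam :=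
            mul_lt_mul_of_pos_right hz (Real.exp_pos lam)
          rw [mul_assoc, ← Real.exp_add] at h5
          simp at h5
          linarith
        have hy3 : y ≤ 3 := le_trans hyexp (le_trans (Real.exp_le_exp.mpr hlam1) hE3)
        have h0 : 0 ≤ psi c j y := psi_nonneg c hc j hy0
        have hκy3 : κ * y ≤ 3 * R := by nlinarith [mul_le_mul_of_nonneg_left hy3 hκ, hκR]
        have h3R : 3 * R ≤ 3 * (lam⁻¹ * R) := by linarith [hRinvR]
        linarith [h0, hκy3, h3R, hlkx0]
    rw [abs_le]
    constructor
    · linarith [low]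
    · linarith [up, hinvR0, hlkx0]
  · linarith [hlkx0, hinvR0]
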